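/- Let n ≥ 1 and x = (x_1,…,x_n) ∈ ℕ^n. Then, as an identity of polynomials in q, ∑_{α ∈ PF(x)} q^{rsum(α)} = ∑_{(γ_1,…,γ_n) ∈ Γ(n)} (n!/(γ_1!⋯γ_n!)) · q^{∑_{i=1}^{n−1} (γ_1+γ_2+⋯+γ_i − i) x_{i+1}} · ∏_{i=1}^{n} [x_i]_q^{γ_i}. -/

import Mathlib

open Polynomial

/-- `α` is an `x`-parking function of length `n` (`x` given 0-based: `x k` is `x_{k+1}`). -/
def IsVPF (n : ℕ) (x : ℕ → ℕ) (α : Fin n → ℕ) : Prop :=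
  ∀ j : Fin n, (j : ℕ) + 1 ≤
    (Finset.univ.filter fun i => α i < ∑ k ∈ Finset.range ((j : ℕ) + 1), x k).card

/-- The reversed sum `rsum(α) = (∑_{i=1}^n (n+1−i)x_i) − n − sum(α)`. -/
def rsumV (n : ℕ) (x : ℕ → ℕ) (α : Fin n → ℕ) : ℕ :=
  (∑ i ∈ Finset.range n, (n - i) * x i) - n - ∑ i, α i

/-- `Γ(n)`: sequences `(γ_1,…,γ_n) ∈ ℕ^n` with `γ_1+⋯+γ_j ≥ j` for all `j` and total sum `n`
(the condition for `j = n` follows from the total-sum condition, so this agrees with the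
definition requiring the inequality only for `1 ≤ j ≤ n−1`). -/
def GammaSet (n : ℕ) : Set (Fin n → ℕ) :=
  {γ | (∀ j : Fin n, (j : ℕ) + 1 ≤ ∑ k ∈ Finset.Iic j, γ k) ∧ (∑ k, γ k) = n}

/-- The `q`-number `[k]_q = 1 + q + ⋯ + q^{k−1} ∈ ℤ[q]`. -/
noncomputable def qNum (k : ℕ) : Polynomial ℤ := ∑ i ∈ Finset.range k, X ^ i

/-- The exponent `∑_{i=1}^{n−1} (γ_1+⋯+γ_i − i)·x_{i+1}` (here `t = i − 1` is 0-based). -/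
def gammaExp (n : ℕ) (x : ℕ → ℕ) (γ : Fin n → ℕ) : ℕ :=
  ∑ t ∈ Finset.range (n - 1),
    ((∑ k ∈ Finset.univ.filter (fun k : Fin n => (k : ℕ) ≤ t), γ k) - (t + 1)) * x (t + 1)

-- fiber count
def cnt (n : ℕ) (b : Fin n → Fin n) (i : Fin n) : ℕ :=
  (Finset.univ.filter fun j => b j = i).card

lemma cnt_comp_equiv (n : ℕ) (b : Fin n → Fin n) (σ : Equiv.Perm (Fin n)) (i : Fin n) :
    cnt n (b ∘ σ) i = cnt n b i := by
  unfold cnt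
  rw [Finset.card_filter, Finset.card_filter]
  exact Fintype.sum_equiv σ _ _ (fun j => rfl)

lemma cnt_sum (n : ℕ) (b : Fin n → Fin n) : ∑ i, cnt n b i = n := by
  classical
  have := Finset.card_eq_sum_card_fiberwise (f := b) (s := Finset.univ)
    (t := Finset.univ) (fun x _ => Finset.mem_univ _)
  simpa [cnt] using this.symm

lemma prod_comp_cnt {M : Type*} [CommMonoid M] (n : ℕ) (b : Fin n → Fin n) (g : Fin n → M) :
    ∏ j, g (b j) = ∏ i, g i ^ cnt n b i := by
  classical
  rw [← Finset.prod_fiberwise_of_maps_to (g := b) (t := Finset.univ)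
    (fun j _ => Finset.mem_univ _) (fun j => g (b j))]
  refine Finset.prod_congr rfl fun i _ => ?_
  rw [Finset.prod_congr rfl (fun j hj => ?_), Finset.prod_const, cnt]
  rw [Finset.mem_filter] at hj
  rw [hj.2]

/-- key counting lemma: number of functions with prescribed fiber sizes -/
lemma card_fiber_mul (n : ℕ) (γ : Fin n → ℕ) (hγ : ∑ i, γ i = n) :
    (Finset.univ.filter fun b : Fin n → Fin n => cnt n b = γ).card *
      ∏ i, (γ i).factorial = n.factorial := by
  classical
  -- a function with fiber sizes γ
  have hcard : Fintype.card (Σ i : Fin n, Fin (γ i)) = Fintype.card (Fin n) := by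
    simp [hγ]
  let e : (Σ i : Fin n, Fin (γ i)) ≃ Fin n := Fintype.equivOfCardEq hcard
  let b₀ : Fin n → Fin n := fun j => (e.symm j).1
  have hb₀ : cnt n b₀ = γ := by
    funext i
    unfold cnt
    rw [Finset.card_filter]
    have h1 : ∑ j : Fin n, (if b₀ j = i then 1 else 0)
        = ∑ p : Σ i' : Fin n, Fin (γ i'), (if p.1 = i then 1 else 0) :=
      (Fintype.sum_equiv e _ _ (fun p => by simp [b₀])).symm
    rw [h1, ← Finset.univ_sigma_univ, Finset.sum_sigma]
    simp [apply_ite Finset.card, Finset.sum_ite_eq, Finset.sum_ite_eq']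
  -- every function with fiber sizes γ is b₀ ∘ σ
  have hsub : ∀ b : Fin n → Fin n, cnt n b = γ → ∃ σ : Equiv.Perm (Fin n), b₀ ∘ σ = b := by
    intro b hb
    have hfib : ∀ c : Fin n, Fintype.card {a // b a = c} = Fintype.card {a // b₀ a = c} := by
      intro c
      have h1 : Fintype.card {a // b a = c} = cnt n b c := by
        rw [Fintype.card_subtype]; rfl
      have h2 : Fintype.card {a // b₀ a = c} = cnt n b₀ c := by
        rw [Fintype.card_subtype]; rfl
      rw [h1, h2, hb, hb₀]
    let w : ∀ c, {a // b a = c} ≃ {a // b₀ a = c} := fun c => Fintype.equivOfCardEq (hfib c)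
    exact ⟨Equiv.ofFiberEquiv w, funext fun a => Equiv.ofFiberEquiv_map w a⟩
  have hmaps : ∀ σ : Equiv.Perm (Fin n),
      (b₀ ∘ σ) ∈ (Finset.univ.filter fun b : Fin n → Fin n => cnt n b = γ) := by
    intro σ
    simp only [Finset.mem_filter, Finset.mem_univ, true_and]
    funext i
    rw [cnt_comp_equiv, hb₀]
  have hcount := Finset.card_eq_sum_card_fiberwise
      (f := fun σ : Equiv.Perm (Fin n) => b₀ ∘ σ)
      (s := Finset.univ) (t := Finset.univ.filter fun b : Fin n → Fin n => cnt n b = γ)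
      (fun σ _ => hmaps σ)
  rw [Finset.card_univ, Fintype.card_perm, Fintype.card_fin] at hcount
  have hfibcard : ∀ b ∈ (Finset.univ.filter fun b : Fin n → Fin n => cnt n b = γ),
      (Finset.univ.filter fun σ : Equiv.Perm (Fin n) => b₀ ∘ σ = b).card
        = ∏ i, (γ i).factorial := by
    intro b hb
    rw [Finset.mem_filter] at hb
    obtain ⟨σb, hσb⟩ := hsub b hb.2
    have hbij : (Finset.univ.filter fun σ : Equiv.Perm (Fin n) => b₀ ∘ σ = b).card
        = (Finset.univ.filter fun σ : Equiv.Perm (Fin n) => b₀ ∘ σ = b₀).card := by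
      refine Finset.card_bij' (fun σ _ => σb.symm.trans σ) (fun ρ _ => σb.trans ρ) ?_ ?_ ?_ ?_
      · intro σ hσ
        rw [Finset.mem_filter] at hσ ⊢
        refine ⟨Finset.mem_univ _, funext fun j => ?_⟩
        have h1 : b₀ (σ (σb.symm j)) = b (σb.symm j) := congrFun hσ.2 (σb.symm j)
        have h2 : b (σb.symm j) = b₀ (σb (σb.symm j)) := (congrFun hσb (σb.symm j)).symm
        simp only [Function.comp, Equiv.trans_apply]
        rw [h1, h2, Equiv.apply_symm_apply]
      · intro ρ hρ
        rw [Finset.mem_filter] at hρ ⊢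
        refine ⟨Finset.mem_univ _, funext fun j => ?_⟩
        have h1 : b₀ (ρ (σb j)) = b₀ (σb j) := congrFun hρ.2 (σb j)
        have h2 : b₀ (σb j) = b j := congrFun hσb j
        simp only [Function.comp, Equiv.trans_apply]
        rw [h1, h2]
      · intro σ _; ext j; simp
      · intro ρ _; ext j; simp
    rw [hbij]
    have hstab := DomMulAct.stabilizer_card (f := b₀)
    have hc1 : (Finset.univ.filter fun σ : Equiv.Perm (Fin n) => b₀ ∘ σ = b₀).card
        = Fintype.card {g : Equiv.Perm (Fin n) // b₀ ∘ g = b₀} := by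
      rw [Fintype.card_subtype]
    rw [hc1, hstab]
    refine Finset.prod_congr rfl fun i _ => ?_
    congr 1
    rw [Fintype.card_subtype, ← hb₀]
    rfl
  rw [Finset.sum_congr rfl hfibcard, Finset.sum_const, smul_eq_mul] at hcount
  exact hcount.symm

/-! ### Block decomposition -/

def sAcc (x : ℕ → ℕ) (m : ℕ) : ℕ := ∑ k ∈ Finset.range m, x k

lemma sAcc_mono (x : ℕ → ℕ) {a b : ℕ} (h : a ≤ b) : sAcc x a ≤ sAcc x b :=
  Finset.sum_le_sum_of_subset (Finset.range_subset_range.mpr h)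

lemma sAcc_succ (x : ℕ → ℕ) (m : ℕ) : sAcc x (m + 1) = sAcc x m + x m :=
  Finset.sum_range_succ x m

def blk (n : ℕ) (x : ℕ → ℕ) (v : ℕ) : ℕ :=
  Nat.findGreatest (fun i => sAcc x i ≤ v) (n - 1)

lemma blk_le (n : ℕ) (x : ℕ → ℕ) (v : ℕ) : blk n x v ≤ n - 1 :=
  Nat.findGreatest_le _

lemma blk_lt (n : ℕ) (hn : 1 ≤ n) (x : ℕ → ℕ) (v : ℕ) : blk n x v < n :=
  lt_of_le_of_lt (blk_le n x v) (by omega)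

lemma sAcc_blk_le (n : ℕ) (x : ℕ → ℕ) (v : ℕ) : sAcc x (blk n x v) ≤ v :=
  Nat.findGreatest_spec (P := fun i => sAcc x i ≤ v) (Nat.zero_le _) (by simp [sAcc])

lemma lt_sAcc_blk_succ (n : ℕ) (hn : 1 ≤ n) (x : ℕ → ℕ) {v : ℕ} (hv : v < sAcc x n) :
    v < sAcc x (blk n x v + 1) := by
  by_cases h : blk n x v = n - 1
  · have : blk n x v + 1 = n := by omega
    rw [this]; exact hv
  · have hle : blk n x v + 1 ≤ n - 1 := by
      have := blk_le n x v; omega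
    have hmax : ¬ sAcc x (blk n x v + 1) ≤ v :=
      Nat.findGreatest_is_greatest (P := fun i => sAcc x i ≤ v) (n := n - 1)
        (Nat.lt_succ_self _) hle
    omega

lemma blk_eq (n : ℕ) (hn : 1 ≤ n) (x : ℕ → ℕ) {i v : ℕ} (hi : i < n)
    (h1 : sAcc x i ≤ v) (h2 : v < sAcc x (i + 1)) : blk n x v = i := by
  refine le_antisymm ?_ (Nat.le_findGreatest (by omega) h1)
  by_contra h
  push_neg at h
  have hspec : sAcc x (blk n x v) ≤ v := sAcc_blk_le n x v
  have : sAcc x (i + 1) ≤ sAcc x (blk n x v) := sAcc_mono x (by omega)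
  omega

/-! ### cumulative counts -/

lemma cnt_cumul (n : ℕ) (b : Fin n → Fin n) (t : ℕ) :
    ∑ k ∈ Finset.univ.filter (fun k : Fin n => (k : ℕ) ≤ t), cnt n b k
      = (Finset.univ.filter fun j => (b j : ℕ) ≤ t).card := by
  classical
  have h := Finset.card_eq_sum_card_fiberwise
    (f := b) (s := Finset.univ.filter fun j => (b j : ℕ) ≤ t)
    (t := Finset.univ.filter fun k : Fin n => (k : ℕ) ≤ t)
    (fun j hj => by
      rw [Finset.mem_coe, Finset.mem_filter] at hj ⊢
      exact ⟨Finset.mem_univ _, hj.2⟩)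
  rw [h]
  refine Finset.sum_congr rfl fun k hk => ?_
  rw [Finset.mem_filter] at hk
  unfold cnt
  congr 1
  ext j
  simp only [Finset.mem_filter, Finset.mem_univ, true_and]
  exact ⟨fun h2 => ⟨h2 ▸ hk.2, h2⟩, fun h2 => h2.2⟩

def Bset (n : ℕ) : Finset (Fin n → Fin n) :=
  Finset.univ.filter fun b => ∀ t : Fin n, (t : ℕ) + 1 ≤ ∑ k ∈ Finset.Iic t, cnt n b k

lemma Iic_cnt_eq (n : ℕ) (b : Fin n → Fin n) (t : Fin n) :
    ∑ k ∈ Finset.Iic t, cnt n b k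
      = ∑ k ∈ Finset.univ.filter (fun k : Fin n => (k : ℕ) ≤ (t : ℕ)), cnt n b k := by
  refine Finset.sum_congr ?_ (fun _ _ => rfl)
  ext k
  rw [Finset.mem_Iic, Finset.mem_filter]
  simp only [Finset.mem_univ, true_and]
  exact Fin.le_def

lemma Ble (n : ℕ) (b : Fin n → Fin n) (hb : b ∈ Bset n) {t : ℕ} (ht : t < n) :
    t + 1 ≤ (Finset.univ.filter fun j => (b j : ℕ) ≤ t).card := by
  rw [Bset, Finset.mem_filter] at hb
  have := hb.2 ⟨t, ht⟩
  rw [Iic_cnt_eq, cnt_cumul] at this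
  exact this
lemma M_eq (n : ℕ) (hn : 1 ≤ n) (x : ℕ → ℕ) (b : Fin n → Fin n) (hb : b ∈ Bset n) :
    ∑ i ∈ Finset.range n, (n - i) * x i
      = gammaExp n x (cnt n b) + ∑ j, sAcc x ((b j : ℕ) + 1) := by
  classical
  have hn1 : n - 1 + 1 = n := by omega
  have h1 : ∀ j : Fin n, sAcc x ((b j : ℕ) + 1)
      = ∑ k ∈ Finset.range n, if k ≤ (b j : ℕ) then x k else 0 := by
    intro j
    rw [← Finset.sum_filter]
    refine (Finset.sum_congr ?_ fun _ _ => rfl)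
    ext k
    simp only [Finset.mem_range, Finset.mem_filter]
    have := (b j).isLt
    omega
  have hcompl : ∀ t : ℕ, t < n →
      (Finset.univ.filter fun j => t + 1 ≤ (b j : ℕ)).card = n - (Finset.univ.filter fun j => (b j : ℕ) ≤ t).card := by
    intro t ht
    have heq : (Finset.univ.filter fun j => t + 1 ≤ (b j : ℕ))
        = (Finset.univ.filter fun j : Fin n => ¬ (b j : ℕ) ≤ t) :=
      Finset.filter_congr fun j _ => by rw [Nat.not_le]; exact Iff.rfl
    have hadd := Finset.card_filter_add_card_filter_not
      (s := (Finset.univ : Finset (Fin n))) (p := fun j => (b j : ℕ) ≤ t)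
    rw [Finset.card_univ, Fintype.card_fin] at hadd
    rw [heq]
    omega
  have hS : ∑ j, sAcc x ((b j : ℕ) + 1)
      = ∑ t ∈ Finset.range (n - 1), (n - (Finset.univ.filter fun j => (b j : ℕ) ≤ t).card) * x (t + 1) + n * x 0 := by
    calc ∑ j, sAcc x ((b j : ℕ) + 1)
        = ∑ k ∈ Finset.range n, ∑ j : Fin n, (if k ≤ (b j : ℕ) then x k else 0) := by
          rw [Finset.sum_congr rfl fun j _ => h1 j, Finset.sum_comm]
      _ = ∑ k ∈ Finset.range n, (Finset.univ.filter fun j => k ≤ (b j : ℕ)).card * x k := by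
          refine Finset.sum_congr rfl fun k _ => ?_
          rw [Finset.sum_ite, Finset.sum_const_zero, add_zero, Finset.sum_const, smul_eq_mul]
      _ = ∑ t ∈ Finset.range (n - 1),
            (Finset.univ.filter fun j => t + 1 ≤ (b j : ℕ)).card * x (t + 1)
            + (Finset.univ.filter fun j => 0 ≤ (b j : ℕ)).card * x 0 := by
          have hrange : Finset.range n = Finset.range (n - 1 + 1) := by rw [hn1]
          rw [hrange, Finset.sum_range_succ']
      _ = ∑ t ∈ Finset.range (n - 1), (n - (Finset.univ.filter fun j => (b j : ℕ) ≤ t).card) * x (t + 1) + n * x 0 := by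
          congr 1
          · exact Finset.sum_congr rfl fun t ht => by
              rw [hcompl t (by rw [Finset.mem_range] at ht; omega)]
          · congr 1
            have : (Finset.univ.filter fun j : Fin n => 0 ≤ (b j : ℕ)) = Finset.univ := by
              apply Finset.filter_true_of_mem
              intro j _
              exact Nat.zero_le _
            rw [this, Finset.card_univ, Fintype.card_fin]
  have hE : gammaExp n x (cnt n b)
      = ∑ t ∈ Finset.range (n - 1), ((Finset.univ.filter fun j => (b j : ℕ) ≤ t).card - (t + 1)) * x (t + 1) := by
    unfold gammaExp
    exact Finset.sum_congr rfl fun t _ => by rw [cnt_cumul]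
  have hM : ∑ i ∈ Finset.range n, (n - i) * x i
      = ∑ t ∈ Finset.range (n - 1), (n - (t + 1)) * x (t + 1) + (n - 0) * x 0 := by
    have hrange : Finset.range n = Finset.range (n - 1 + 1) := by rw [hn1]
    rw [hrange, Finset.sum_range_succ']
  have hsplit : ∑ t ∈ Finset.range (n - 1), (n - (t + 1)) * x (t + 1)
      = ∑ t ∈ Finset.range (n - 1), ((Finset.univ.filter fun j => (b j : ℕ) ≤ t).card - (t + 1)) * x (t + 1)
        + ∑ t ∈ Finset.range (n - 1), (n - (Finset.univ.filter fun j => (b j : ℕ) ≤ t).card) * x (t + 1) := by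
    rw [← Finset.sum_add_distrib]
    refine Finset.sum_congr rfl fun t ht => ?_
    rw [Finset.mem_range] at ht
    have hle : t + 1 ≤ (Finset.univ.filter fun j => (b j : ℕ) ≤ t).card := Ble n b hb (by omega)
    have hCle : (Finset.univ.filter fun j => (b j : ℕ) ≤ t).card ≤ n := by
      calc (Finset.univ.filter fun j => (b j : ℕ) ≤ t).card
          ≤ (Finset.univ : Finset (Fin n)).card := Finset.card_filter_le _ _
        _ = n := by rw [Finset.card_univ, Fintype.card_fin]
    rw [← add_mul]
    congr 1
    omega
  rw [hM, hE, hS, hsplit, Nat.sub_zero]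
  ring

lemma rsum_decomp (n : ℕ) (hn : 1 ≤ n) (x : ℕ → ℕ) (b : Fin n → Fin n) (hb : b ∈ Bset n)
    (r : Fin n → ℕ) (hr : ∀ j, r j < x (b j)) :
    rsumV n x (fun j => sAcc x ((b j : ℕ) + 1) - 1 - r j)
      = gammaExp n x (cnt n b) + ∑ j, r j := by
  have hαj : ∀ j : Fin n, (sAcc x ((b j : ℕ) + 1) - 1 - r j) + r j + 1
      = sAcc x ((b j : ℕ) + 1) := by
    intro j
    have := sAcc_succ x (b j : ℕ)
    have := hr j
    omega
  have hsum : (∑ j, (sAcc x ((b j : ℕ) + 1) - 1 - r j)) + (∑ j, r j) + n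
      = ∑ j, sAcc x ((b j : ℕ) + 1) := by
    calc (∑ j, (sAcc x ((b j : ℕ) + 1) - 1 - r j)) + (∑ j, r j) + n
        = ∑ j : Fin n, ((sAcc x ((b j : ℕ) + 1) - 1 - r j) + r j + 1) := by
          rw [Finset.sum_add_distrib, Finset.sum_add_distrib, Finset.sum_const,
            Finset.card_univ, Fintype.card_fin, smul_eq_mul, mul_one]
      _ = _ := Finset.sum_congr rfl fun j _ => hαj j
  have hM := M_eq n hn x b hb
  unfold rsumV
  beta_reduce
  omega
lemma filter_blk_eq (n : ℕ) (x : ℕ → ℕ) (α : Fin n → ℕ) (b : Fin n → Fin n)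
    (h1 : ∀ j, sAcc x (b j : ℕ) ≤ α j) (h2 : ∀ j, α j < sAcc x ((b j : ℕ) + 1)) (t : ℕ) :
    (Finset.univ.filter fun i => α i < sAcc x (t + 1))
      = (Finset.univ.filter fun i => (b i : ℕ) ≤ t) := by
  refine Finset.filter_congr fun i _ => ?_
  constructor
  · intro h
    by_contra hc
    push_neg at hc
    have hm : sAcc x (t + 1) ≤ sAcc x (b i : ℕ) := sAcc_mono x (by omega)
    have := h1 i
    omega
  · intro h
    have hm : sAcc x ((b i : ℕ) + 1) ≤ sAcc x (t + 1) := sAcc_mono x (by omega)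
    have := h2 i
    omega

lemma card_iff (n : ℕ) (x : ℕ → ℕ) (α : Fin n → ℕ) (b : Fin n → Fin n)
    (h1 : ∀ j, sAcc x (b j : ℕ) ≤ α j) (h2 : ∀ j, α j < sAcc x ((b j : ℕ) + 1)) (t : Fin n) :
    (Finset.univ.filter fun i => α i < ∑ k ∈ Finset.range ((t : ℕ) + 1), x k).card
      = ∑ k ∈ Finset.Iic t, cnt n b k := by
  rw [Iic_cnt_eq, cnt_cumul]
  congr 1
  exact filter_blk_eq n x α b h1 h2 (t : ℕ)

lemma isVPF_iff_mem_B (n : ℕ) (x : ℕ → ℕ) (α : Fin n → ℕ) (b : Fin n → Fin n)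
    (h1 : ∀ j, sAcc x (b j : ℕ) ≤ α j) (h2 : ∀ j, α j < sAcc x ((b j : ℕ) + 1)) :
    IsVPF n x α ↔ b ∈ Bset n := by
  unfold IsVPF Bset
  rw [Finset.mem_filter]
  constructor
  · intro h
    refine ⟨Finset.mem_univ _, fun t => ?_⟩
    rw [← card_iff n x α b h1 h2 t]
    exact h t
  · intro h t
    rw [card_iff n x α b h1 h2 t]
    exact h.2 t

lemma vpf_lt (n : ℕ) (hn : 1 ≤ n) (x : ℕ → ℕ) (α : Fin n → ℕ) (hα : IsVPF n x α) :
    ∀ j, α j < sAcc x n := by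
  have h := hα ⟨n - 1, by omega⟩
  have hn1 : n - 1 + 1 = n := by omega
  simp only [hn1] at h
  have hcard : (Finset.univ.filter fun i => α i < ∑ k ∈ Finset.range n, x k).card
      = Fintype.card (Fin n) := by
    have hle := Finset.card_filter_le (Finset.univ : Finset (Fin n))
      (fun i => α i < ∑ k ∈ Finset.range n, x k)
    rw [Finset.card_univ, Fintype.card_fin] at hle
    rw [Fintype.card_fin]
    omega
  have huniv := Finset.eq_univ_of_card _ hcard
  intro j
  have : j ∈ Finset.univ.filter fun i => α i < ∑ k ∈ Finset.range n, x k := by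
    rw [huniv]; exact Finset.mem_univ _
  rw [Finset.mem_filter] at this
  exact this.2
lemma finite_PF (n : ℕ) (hn : 1 ≤ n) (x : ℕ → ℕ) :
    {α : Fin n → ℕ | IsVPF n x α}.Finite := by
  apply Set.Finite.subset (Set.Finite.pi (fun i : Fin n => Set.finite_Iio (sAcc x n)))
  intro α hα
  rw [Set.mem_pi]
  intro i _
  exact vpf_lt n hn x α hα i

lemma finite_Gamma (n : ℕ) : (GammaSet n).Finite := by
  apply Set.Finite.subset (Set.Finite.pi (fun i : Fin n => Set.finite_Iic n))
  intro γ hγ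
  rw [Set.mem_pi]
  intro i _
  have := Finset.single_le_sum (f := γ) (fun i _ => Nat.zero_le _) (Finset.mem_univ i)
  rw [hγ.2] at this
  exact this

lemma sum_PF (n : ℕ) (hn : 1 ≤ n) (x : ℕ → ℕ)
    (hfin : {α : Fin n → ℕ | IsVPF n x α}.Finite) :
    ∑ α ∈ hfin.toFinset, (X : Polynomial ℤ) ^ rsumV n x α
      = ∑ p ∈ (Bset n).sigma (fun b => Fintype.piFinset fun j => Finset.range (x (b j))),
          (X : Polynomial ℤ) ^ (gammaExp n x (cnt n p.1) + ∑ j, p.2 j) := by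
  classical
  refine Finset.sum_bij'
    (i := fun α hα => (⟨fun j => (⟨blk n x (α j), blk_lt n hn x (α j)⟩ : Fin n),
      fun j => sAcc x (blk n x (α j) + 1) - 1 - α j⟩ :
        Σ _ : Fin n → Fin n, Fin n → ℕ))
    (j := fun p hp => fun j => sAcc x ((p.1 j : ℕ) + 1) - 1 - p.2 j)
    ?_ ?_ ?_ ?_ ?_
  · -- hi : maps into sigma
    intro α hα
    rw [Set.Finite.mem_toFinset] at hα
    have hα' : IsVPF n x α := hα
    have hlt := vpf_lt n hn x α hα'
    have h1 : ∀ j, sAcc x ((⟨blk n x (α j), blk_lt n hn x (α j)⟩ : Fin n) : ℕ) ≤ α j :=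
      fun j => sAcc_blk_le n x (α j)
    have h2 : ∀ j, α j < sAcc x (((⟨blk n x (α j), blk_lt n hn x (α j)⟩ : Fin n) : ℕ) + 1) :=
      fun j => lt_sAcc_blk_succ n hn x (hlt j)
    rw [Finset.mem_sigma]
    constructor
    · exact (isVPF_iff_mem_B n x α _ h1 h2).mp hα'
    · rw [Fintype.mem_piFinset]
      intro j
      rw [Finset.mem_range]
      have hs := sAcc_succ x (blk n x (α j))
      have := h1 j
      have := h2 j
      simp only [Fin.val_mk] at *
      omega
  · -- hj : maps into PF
    intro p hp
    rw [Finset.mem_sigma] at hp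
    obtain ⟨hb, hr⟩ := hp
    rw [Fintype.mem_piFinset] at hr
    have hr' : ∀ j, p.2 j < x (p.1 j) := fun j => Finset.mem_range.mp (hr j)
    have h1 : ∀ j, sAcc x (p.1 j : ℕ) ≤ sAcc x ((p.1 j : ℕ) + 1) - 1 - p.2 j := by
      intro j
      have hs := sAcc_succ x (p.1 j : ℕ)
      have := hr' j
      omega
    have h2 : ∀ j, sAcc x ((p.1 j : ℕ) + 1) - 1 - p.2 j < sAcc x ((p.1 j : ℕ) + 1) := by
      intro j
      have hs := sAcc_succ x (p.1 j : ℕ)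
      have := hr' j
      omega
    rw [Set.Finite.mem_toFinset]
    exact (isVPF_iff_mem_B n x _ p.1 h1 h2).mpr hb
  · -- left_inv
    intro α hα
    rw [Set.Finite.mem_toFinset] at hα
    have hlt := vpf_lt n hn x α hα
    funext j
    have h2 : α j < sAcc x (blk n x (α j) + 1) := lt_sAcc_blk_succ n hn x (hlt j)
    have h1 : sAcc x (blk n x (α j)) ≤ α j := sAcc_blk_le n x (α j)
    have hs := sAcc_succ x (blk n x (α j))
    simp only [Fin.val_mk]
    omega
  · -- right_inv
    intro p hp
    rw [Finset.mem_sigma] at hp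
    obtain ⟨b, r⟩ := p
    obtain ⟨hb, hr⟩ := hp
    rw [Fintype.mem_piFinset] at hr
    have hr' : ∀ j, r j < x (b j) := fun j => Finset.mem_range.mp (hr j)
    have hblk : ∀ j, blk n x (sAcc x ((b j : ℕ) + 1) - 1 - r j) = (b j : ℕ) := by
      intro j
      have hs := sAcc_succ x (b j : ℕ)
      have := hr' j
      refine blk_eq n hn x (b j).isLt (by omega) (by omega)
    refine Sigma.ext (funext fun j => Fin.ext ?_) (heq_of_eq (funext fun j => ?_))
    · exact hblk j
    · show sAcc x (blk n x (sAcc x ((b j : ℕ) + 1) - 1 - r j) + 1) - 1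
          - (sAcc x ((b j : ℕ) + 1) - 1 - r j) = r j
      rw [hblk j]
      have hs := sAcc_succ x (b j : ℕ)
      have := hr' j
      omega
  · -- values
    intro α hα
    rw [Set.Finite.mem_toFinset] at hα
    have hlt := vpf_lt n hn x α hα
    have h1 : ∀ j, sAcc x ((⟨blk n x (α j), blk_lt n hn x (α j)⟩ : Fin n) : ℕ) ≤ α j :=
      fun j => sAcc_blk_le n x (α j)
    have h2 : ∀ j, α j < sAcc x (((⟨blk n x (α j), blk_lt n hn x (α j)⟩ : Fin n) : ℕ) + 1) :=
      fun j => lt_sAcc_blk_succ n hn x (hlt j)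
    have hb : (fun j => (⟨blk n x (α j), blk_lt n hn x (α j)⟩ : Fin n)) ∈ Bset n :=
      (isVPF_iff_mem_B n x α _ h1 h2).mp hα
    have hrlt : ∀ j, sAcc x (blk n x (α j) + 1) - 1 - α j
        < x ((⟨blk n x (α j), blk_lt n hn x (α j)⟩ : Fin n)) := by
      intro j
      have hs := sAcc_succ x (blk n x (α j))
      have := h1 j
      have := h2 j
      simp only [Fin.val_mk] at *
      omega
    have hd := rsum_decomp n hn x _ hb _ hrlt
    have hfun : (fun j => sAcc x (((⟨blk n x (α j), blk_lt n hn x (α j)⟩ : Fin n) : ℕ) + 1)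
        - 1 - (sAcc x (blk n x (α j) + 1) - 1 - α j)) = α := by
      funext j
      have := h1 j
      have := h2 j
      have hs := sAcc_succ x (blk n x (α j))
      simp only [Fin.val_mk] at *
      omega
    rw [hfun] at hd
    rw [hd]
lemma sum_B (n : ℕ) (x : ℕ → ℕ) (hfinΓ : (GammaSet n).Finite) :
    ∑ b ∈ Bset n, (X : Polynomial ℤ) ^ gammaExp n x (cnt n b) * ∏ j, qNum (x (b j))
      = ∑ γ ∈ hfinΓ.toFinset,
          ((Nat.factorial n / ∏ i : Fin n, Nat.factorial (γ i) : ℕ) : Polynomial ℤ) *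
            X ^ gammaExp n x γ * ∏ i : Fin n, qNum (x (i : ℕ)) ^ γ i := by
  classical
  have hmaps : ∀ b ∈ Bset n, cnt n b ∈ hfinΓ.toFinset := by
    intro b hb
    rw [Set.Finite.mem_toFinset]
    rw [Bset, Finset.mem_filter] at hb
    show (∀ j : Fin n, (j : ℕ) + 1 ≤ ∑ k ∈ Finset.Iic j, cnt n b k)
      ∧ (∑ k, cnt n b k) = n
    exact ⟨hb.2, cnt_sum n b⟩
  rw [← Finset.sum_fiberwise_of_maps_to hmaps]
  refine Finset.sum_congr rfl fun γ hγ => ?_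
  rw [Set.Finite.mem_toFinset] at hγ
  have hfe : (Bset n).filter (fun b => cnt n b = γ)
      = Finset.univ.filter (fun b : Fin n → Fin n => cnt n b = γ) := by
    ext b
    simp only [Finset.mem_filter, Bset, Finset.mem_univ, true_and]
    constructor
    · rintro ⟨_, h2⟩; exact h2
    · intro h2
      refine ⟨fun t => ?_, h2⟩
      rw [show cnt n b = γ from h2]
      exact hγ.1 t
  have hval : ∀ b ∈ Finset.univ.filter (fun b : Fin n → Fin n => cnt n b = γ),
      (X : Polynomial ℤ) ^ gammaExp n x (cnt n b) * ∏ j, qNum (x (b j))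
        = X ^ gammaExp n x γ * ∏ i : Fin n, qNum (x (i : ℕ)) ^ γ i := by
    intro b hb
    rw [Finset.mem_filter] at hb
    rw [prod_comp_cnt n b (fun i => qNum (x (i : ℕ))), hb.2]
  rw [hfe, Finset.sum_congr rfl hval, Finset.sum_const]
  have hc := card_fiber_mul n γ hγ.2
  have hpos : 0 < ∏ i, (γ i).factorial :=
    Finset.prod_pos fun i _ => Nat.factorial_pos _
  have hdiv : Nat.factorial n / ∏ i, (γ i).factorial
      = (Finset.univ.filter (fun b : Fin n → Fin n => cnt n b = γ)).card :=
    Nat.div_eq_of_eq_mul_left hpos hc.symm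
  rw [hdiv, nsmul_eq_mul, mul_assoc]


/-- Pitman–Stanley and Kung–Yan: the reversed sum enumerator for `x`-parking functions equals
`∑_{γ ∈ Γ(n)} (n!/(γ_1!⋯γ_n!)) q^{∑_{i=1}^{n−1}(γ_1+⋯+γ_i−i)x_{i+1}} ∏_{i=1}^n [x_i]_q^{γ_i}`. -/
theorem stmt2 (n : ℕ) (hn : 1 ≤ n) (x : ℕ → ℕ) :
    ∑ᶠ α ∈ {α : Fin n → ℕ | IsVPF n x α}, (X : Polynomial ℤ) ^ rsumV n x α =
      ∑ᶠ γ ∈ GammaSet n,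
        ((Nat.factorial n / ∏ i : Fin n, Nat.factorial (γ i) : ℕ) : Polynomial ℤ) *
          X ^ gammaExp n x γ * ∏ i : Fin n, qNum (x (i : ℕ)) ^ γ i := by
    classical
  have hfinPF := finite_PF n hn x
  have hfinΓ := finite_Gamma n
  rw [finsum_mem_eq_finite_toFinset_sum _ hfinPF, finsum_mem_eq_finite_toFinset_sum _ hfinΓ]
  rw [sum_PF n hn x hfinPF, Finset.sum_sigma]
  rw [← sum_B n x hfinΓ]
  refine Finset.sum_congr rfl fun b hb => ?_
  calc ∑ r ∈ Fintype.piFinset (fun j => Finset.range (x (b j))),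
        (X : Polynomial ℤ) ^ (gammaExp n x (cnt n b) + ∑ j, r j)
      = ∑ r ∈ Fintype.piFinset (fun j => Finset.range (x (b j))),
        (X : Polynomial ℤ) ^ gammaExp n x (cnt n b) * ∏ j, X ^ r j := by
        refine Finset.sum_congr rfl fun r _ => ?_
        rw [pow_add, Finset.prod_pow_eq_pow_sum]
    _ = (X : Polynomial ℤ) ^ gammaExp n x (cnt n b) * ∏ j, qNum (x (b j)) := by
        rw [← Finset.mul_sum]
        congr 1
        rw [← Finset.prod_univ_sum]
        rfl
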